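/- Let m ≥ 1, let K ⊆ ℝᵐ be a convex compact set, let F : ℝᵐ → ℝᵐ be continuously differentiable and g₁ : ℝᵐ → ℝ be twice continuously differentiable, with ‖F‖, ‖DF‖, ‖Dg₁‖, ‖D²g₁‖ bounded by a constant L on K. Let η > 0, ξ₀ ∈ ℝᵐ, and let ξᶠ, ξᴮ : [0, η] → ℝᵐ be differentiable curves taking values in K with ξᶠ(0) = ξᴮ(0) = ξ₀, (ξᶠ)′(t) = F(ξᶠ(t)) and (ξᴮ)′(t) = −F(ξᴮ(t)) for all t ∈ [0, η]. Then there exists a constant C depending only on L (and m) such that | ∫₀^η g₁(ξᶠ(t)) dt − η·g₁(ξᶠ(η)) + ∫₀^η g₁(ξᴮ(t)) dt − η·g₁(ξᴮ(η)) | ≤ C·η³. (Each bracketed term alone is only O(η²); the symmetric forward–backward combination cancels the second-order terms.) -/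

import Mathlib

open Set intervalIntegral MeasureTheory

/-- Integration by parts: `∫₀^η h - η h(η) = -∫₀^η t h'(t)`. -/
lemma aux_parts {h φ : ℝ → ℝ} {η : ℝ} (hη : 0 < η)
    (hd : ∀ t ∈ Set.Icc (0:ℝ) η, HasDerivAt h (φ t) t)
    (hc : ContinuousOn φ (Set.Icc (0:ℝ) η)) :
    (∫ t in (0:ℝ)..η, h t) - η * h η = -∫ t in (0:ℝ)..η, t * φ t := by
  have hu : Set.uIcc (0:ℝ) η = Set.Icc 0 η := uIcc_of_le hη.le
  have hch : ContinuousOn h (Set.Icc (0:ℝ) η) := fun t ht =>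
    (hd t ht).continuousAt.continuousWithinAt
  have hG : ∀ t ∈ Set.uIcc (0:ℝ) η,
      HasDerivAt (fun s => s * h s) (h t + t * φ t) t := by
    intro t ht
    rw [hu] at ht
    have := (hasDerivAt_id' t).mul (hd t ht)
    rw [one_mul] at this
    exact this
  have hinth : IntervalIntegrable h volume 0 η :=
    (hch.mono (by rw [hu])).intervalIntegrable
  have hintφ : IntervalIntegrable (fun t => t * φ t) volume 0 η :=
    ((continuousOn_id.mul hc).mono (by rw [hu])).intervalIntegrable
  have hint : IntervalIntegrable (fun t => h t + t * φ t) volume 0 η :=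
    hinth.add hintφ
  have key := intervalIntegral.integral_eq_sub_of_hasDerivAt hG hint
  rw [intervalIntegral.integral_add hinth hintφ] at key
  simp only [zero_mul, sub_zero] at key
  linarith

theorem symmetric_poincare_cancellation
    (m : ℕ) (hm : 1 ≤ m) (L : ℝ) :
    ∃ C : ℝ, 0 ≤ C ∧
      ∀ (K : Set (EuclideanSpace ℝ (Fin m))), Convex ℝ K → IsCompact K →
      ∀ (F : EuclideanSpace ℝ (Fin m) → EuclideanSpace ℝ (Fin m))
        (g₁ : EuclideanSpace ℝ (Fin m) → ℝ),
        ContDiff ℝ 1 F → ContDiff ℝ 2 g₁ →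
        (∀ x ∈ K, ‖F x‖ ≤ L) →
        (∀ x ∈ K, ‖fderiv ℝ F x‖ ≤ L) →
        (∀ x ∈ K, ‖fderiv ℝ g₁ x‖ ≤ L) →
        (∀ x ∈ K, ‖iteratedFDeriv ℝ 2 g₁ x‖ ≤ L) →
      ∀ (η : ℝ), 0 < η →
      ∀ (ξ₀ : EuclideanSpace ℝ (Fin m))
        (ξf ξb : ℝ → EuclideanSpace ℝ (Fin m)),
        (∀ t ∈ Set.Icc (0 : ℝ) η, ξf t ∈ K) →
        (∀ t ∈ Set.Icc (0 : ℝ) η, ξb t ∈ K) →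
        ξf 0 = ξ₀ → ξb 0 = ξ₀ →
        (∀ t ∈ Set.Icc (0 : ℝ) η, HasDerivAt ξf (F (ξf t)) t) →
        (∀ t ∈ Set.Icc (0 : ℝ) η, HasDerivAt ξb (-F (ξb t)) t) →
        |(∫ t in (0 : ℝ)..η, g₁ (ξf t)) - η * g₁ (ξf η)
          + (∫ t in (0 : ℝ)..η, g₁ (ξb t)) - η * g₁ (ξb η)|
          ≤ C * η ^ 3 := by
  set L' : ℝ := max L 0 with hL'def
  have hL0 : 0 ≤ L' := le_max_right _ _
  refine ⟨4 * L' ^ 3, by positivity, ?_⟩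
  intro K hKconv _hKcomp F g₁ hF hg hFb hDFb hDgb hD2gb η hη ξ₀ ξf ξb hξfK hξbK
    hξf0 hξb0 hξf' hξb'
  have hFb' : ∀ x ∈ K, ‖F x‖ ≤ L' := fun x hx => (hFb x hx).trans (le_max_left _ _)
  have hDFb' : ∀ x ∈ K, ‖fderiv ℝ F x‖ ≤ L' := fun x hx =>
    (hDFb x hx).trans (le_max_left _ _)
  have hDgb' : ∀ x ∈ K, ‖fderiv ℝ g₁ x‖ ≤ L' := fun x hx =>
    (hDgb x hx).trans (le_max_left _ _)
  have hD2gb' : ∀ x ∈ K, ‖iteratedFDeriv ℝ 2 g₁ x‖ ≤ L' := fun x hx =>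
    (hD2gb x hx).trans (le_max_left _ _)
  have hdg₁ : Differentiable ℝ g₁ := hg.differentiable two_ne_zero
  have hdF : Differentiable ℝ F := hF.differentiable one_ne_zero
  have hξ₀K : ξ₀ ∈ K := hξf0 ▸ hξfK 0 ⟨le_rfl, hη.le⟩
  -- F is Lipschitz on K
  have hFlip : ∀ x ∈ K, ∀ y ∈ K, ‖F x - F y‖ ≤ L' * ‖x - y‖ := fun x hx y hy =>
    hKconv.norm_image_sub_le_of_norm_fderiv_le (fun z _ => hdF z) hDFb' hy hx
  -- fderiv g₁ is Lipschitz on K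
  have hDglip : ∀ x ∈ K, ∀ y ∈ K, ‖fderiv ℝ g₁ x - fderiv ℝ g₁ y‖ ≤ L' * ‖x - y‖ := by
    intro x hx y hy
    have hiter : ∀ z ∈ K, ‖iteratedFDeriv ℝ 1 g₁ z - iteratedFDeriv ℝ 1 g₁ y‖
        ≤ L' * ‖z - y‖ := by
      intro z hz
      refine hKconv.norm_image_sub_le_of_norm_fderiv_le
        (fun w _ => hg.differentiable_iteratedFDeriv (by norm_num) w) ?_ hy hz
      intro w hw
      rw [norm_fderiv_iteratedFDeriv]
      exact hD2gb' w hw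
    have hkey : ∀ z : EuclideanSpace ℝ (Fin m), fderiv ℝ g₁ z =
        (continuousMultilinearCurryFin1 ℝ (EuclideanSpace ℝ (Fin m)) ℝ) (iteratedFDeriv ℝ 1 g₁ z) := by
      intro z
      ext v
      simp only [continuousMultilinearCurryFin1_apply, iteratedFDeriv_one_apply]
      congr 1
    rw [hkey x, hkey y, ← map_sub, LinearIsometryEquiv.norm_map]
    exact hiter x hx
  -- ψ = Dg₁ · F is Lipschitz on K
  set ψ : EuclideanSpace ℝ (Fin m) → ℝ := fun x => fderiv ℝ g₁ x (F x) with hψdef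
  have hψlip : ∀ x ∈ K, ∀ y ∈ K, |ψ x - ψ y| ≤ 2 * L' ^ 2 * ‖x - y‖ := by
    intro x hx y hy
    have heq : ψ x - ψ y = (fderiv ℝ g₁ x - fderiv ℝ g₁ y) (F x)
        + (fderiv ℝ g₁ y) (F x - F y) := by
      simp only [hψdef, ContinuousLinearMap.sub_apply, map_sub]
      ring
    rw [heq]
    calc |(fderiv ℝ g₁ x - fderiv ℝ g₁ y) (F x) + (fderiv ℝ g₁ y) (F x - F y)|
        = ‖(fderiv ℝ g₁ x - fderiv ℝ g₁ y) (F x) + (fderiv ℝ g₁ y) (F x - F y)‖ :=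
          (Real.norm_eq_abs _).symm
      _ ≤ ‖(fderiv ℝ g₁ x - fderiv ℝ g₁ y) (F x)‖ + ‖(fderiv ℝ g₁ y) (F x - F y)‖ :=
          norm_add_le _ _
      _ ≤ ‖fderiv ℝ g₁ x - fderiv ℝ g₁ y‖ * ‖F x‖
          + ‖fderiv ℝ g₁ y‖ * ‖F x - F y‖ :=
          add_le_add (ContinuousLinearMap.le_opNorm _ _) (ContinuousLinearMap.le_opNorm _ _)
      _ ≤ (L' * ‖x - y‖) * L' + L' * (L' * ‖x - y‖) :=
          add_le_add
            (mul_le_mul (hDglip x hx y hy) (hFb' x hx) (norm_nonneg _) (by positivity))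
            (mul_le_mul (hDgb' y hy) (hFlip x hx y hy) (norm_nonneg _) hL0)
      _ = 2 * L' ^ 2 * ‖x - y‖ := by ring
  -- distances from ξ₀ along curves
  have hξfdist : ∀ t ∈ Set.Icc (0:ℝ) η, ‖ξf t - ξ₀‖ ≤ L' * t := by
    have := norm_image_sub_le_of_norm_deriv_le_segment'
      (f := ξf) (f' := fun t => F (ξf t)) (C := L') (a := 0) (b := η)
      (fun t ht => (hξf' t ht).hasDerivWithinAt)
      (fun t ht => hFb' _ (hξfK t (Set.Ico_subset_Icc_self ht)))
    intro t ht
    have h2 := this t ht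
    rwa [hξf0, sub_zero] at h2
  have hξbdist : ∀ t ∈ Set.Icc (0:ℝ) η, ‖ξb t - ξ₀‖ ≤ L' * t := by
    have := norm_image_sub_le_of_norm_deriv_le_segment'
      (f := ξb) (f' := fun t => -F (ξb t)) (C := L') (a := 0) (b := η)
      (fun t ht => (hξb' t ht).hasDerivWithinAt)
      (fun t ht => by
        rw [norm_neg]; exact hFb' _ (hξbK t (Set.Ico_subset_Icc_self ht)))
    intro t ht
    have h2 := this t ht
    rwa [hξb0, sub_zero] at h2
  -- continuity of ψ
  have hψc : Continuous ψ :=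
    ((hg.fderiv_right (m := 1) (by norm_num)).continuous).clm_apply hF.continuous
  have hξfc : ContinuousOn ξf (Set.Icc (0:ℝ) η) := fun t ht =>
    (hξf' t ht).continuousAt.continuousWithinAt
  have hξbc : ContinuousOn ξb (Set.Icc (0:ℝ) η) := fun t ht =>
    (hξb' t ht).continuousAt.continuousWithinAt
  -- integration by parts for both curves
  have hpf : (∫ t in (0:ℝ)..η, g₁ (ξf t)) - η * g₁ (ξf η)
      = -∫ t in (0:ℝ)..η, t * ψ (ξf t) := by
    refine aux_parts hη (fun t ht => ?_) (hψc.comp_continuousOn hξfc)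
    exact (hdg₁ (ξf t)).hasFDerivAt.comp_hasDerivAt t (hξf' t ht)
  have hpb : (∫ t in (0:ℝ)..η, g₁ (ξb t)) - η * g₁ (ξb η)
      = -∫ t in (0:ℝ)..η, t * (-ψ (ξb t)) := by
    refine aux_parts hη (fun t ht => ?_) ((hψc.comp_continuousOn hξbc).neg)
    have := (hdg₁ (ξb t)).hasFDerivAt.comp_hasDerivAt t (hξb' t ht)
    simp only [map_neg] at this
    exact this
  -- integrability
  have hif : IntervalIntegrable (fun t => t * ψ (ξf t)) volume 0 η :=
    ((continuousOn_id.mul (hψc.comp_continuousOn hξfc)).mono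
      (by rw [uIcc_of_le hη.le])).intervalIntegrable
  have hib : IntervalIntegrable (fun t => t * ψ (ξb t)) volume 0 η :=
    ((continuousOn_id.mul (hψc.comp_continuousOn hξbc)).mono
      (by rw [uIcc_of_le hη.le])).intervalIntegrable
  -- combine
  have hcomb : (∫ t in (0:ℝ)..η, g₁ (ξf t)) - η * g₁ (ξf η)
      + (∫ t in (0:ℝ)..η, g₁ (ξb t)) - η * g₁ (ξb η)
      = -∫ t in (0:ℝ)..η, t * (ψ (ξf t) - ψ (ξb t)) := by
    have hsub : (∫ t in (0:ℝ)..η, t * (ψ (ξf t) - ψ (ξb t)))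
        = (∫ t in (0:ℝ)..η, t * ψ (ξf t)) - ∫ t in (0:ℝ)..η, t * ψ (ξb t) := by
      rw [← intervalIntegral.integral_sub hif hib]
      congr 1
      ext t
      ring
    have hbneg : (∫ t in (0:ℝ)..η, t * (-ψ (ξb t)))
        = -∫ t in (0:ℝ)..η, t * ψ (ξb t) := by
      rw [← intervalIntegral.integral_neg]
      congr 1
      ext t
      ring
    rw [hbneg] at hpb
    linarith [hpf, hpb, hsub]
  rw [hcomb, abs_neg]
  have hbound : ∀ t ∈ Set.uIoc (0:ℝ) η, ‖t * (ψ (ξf t) - ψ (ξb t))‖ ≤ 4 * L' ^ 3 * η ^ 2 := by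
    intro t ht
    rw [Set.uIoc_of_le hη.le] at ht
    have htIcc : t ∈ Set.Icc (0:ℝ) η := ⟨ht.1.le, ht.2⟩
    have ht0 : 0 ≤ t := ht.1.le
    have htη : t ≤ η := ht.2
    have h1 : |ψ (ξf t) - ψ ξ₀| ≤ 2 * L' ^ 2 * (L' * t) := by
      refine (hψlip _ (hξfK t htIcc) _ hξ₀K).trans ?_
      exact mul_le_mul_of_nonneg_left (hξfdist t htIcc) (by positivity)
    have h2 : |ψ (ξb t) - ψ ξ₀| ≤ 2 * L' ^ 2 * (L' * t) := by
      refine (hψlip _ (hξbK t htIcc) _ hξ₀K).trans ?_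
      exact mul_le_mul_of_nonneg_left (hξbdist t htIcc) (by positivity)
    have h3 : |ψ (ξf t) - ψ (ξb t)| ≤ 4 * L' ^ 3 * t := by
      have := abs_sub_abs_le_abs_sub (ψ (ξf t) - ψ ξ₀) (ψ (ξb t) - ψ ξ₀)
      have htri : |ψ (ξf t) - ψ (ξb t)|
          ≤ |ψ (ξf t) - ψ ξ₀| + |ψ (ξb t) - ψ ξ₀| := by
        have : ψ (ξf t) - ψ (ξb t) = (ψ (ξf t) - ψ ξ₀) - (ψ (ξb t) - ψ ξ₀) := by ring
        rw [this]
        exact abs_sub _ _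
      calc |ψ (ξf t) - ψ (ξb t)| ≤ |ψ (ξf t) - ψ ξ₀| + |ψ (ξb t) - ψ ξ₀| := htri
        _ ≤ 2 * L' ^ 2 * (L' * t) + 2 * L' ^ 2 * (L' * t) := add_le_add h1 h2
        _ = 4 * L' ^ 3 * t := by ring
    calc ‖t * (ψ (ξf t) - ψ (ξb t))‖ = |t| * |ψ (ξf t) - ψ (ξb t)| := by
          rw [Real.norm_eq_abs, abs_mul]
      _ ≤ η * (4 * L' ^ 3 * η) := by
          rw [abs_of_nonneg ht0]
          have h4 : |ψ (ξf t) - ψ (ξb t)| ≤ 4 * L' ^ 3 * η :=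
            h3.trans (mul_le_mul_of_nonneg_left htη (by positivity))
          exact mul_le_mul htη h4 (abs_nonneg _) hη.le
      _ = 4 * L' ^ 3 * η ^ 2 := by ring
  have := intervalIntegral.norm_integral_le_of_norm_le_const hbound
  rw [sub_zero, abs_of_pos hη] at this
  calc |∫ t in (0:ℝ)..η, t * (ψ (ξf t) - ψ (ξb t))|
      ≤ 4 * L' ^ 3 * η ^ 2 * η := this
    _ = 4 * L' ^ 3 * η ^ 3 := by ring
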